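/- Let Ω ⊆ ℝ^d be a nonempty open connected set with Lebesgue measure, and let C : Ω → L(ℓ²(ℕ)) be a map into the bounded linear operators on ℓ²(ℕ) such that for every y ∈ ℓ²(ℕ) the function x ↦ C(x)y is (almost everywhere) strongly measurable, and such that C is essentially uniformly bounded (there is K with ‖C(x)‖ ≤ K for a.e. x). Let H := L²(Ω, ℓ²(ℕ)). Then for α > 0 the following are equivalent: (a) for almost all x ∈ Ω, Re (C(x)y | y)_{ℓ²} ≥ α‖y‖²_{ℓ²} for all y ∈ ℓ²(ℕ); (b) for all ψ ∈ H, Re ∫_Ω (C(x)ψ(x) | ψ(x))_{ℓ²} dx ≥ α‖ψ‖²_H. -/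

import Mathlib

open MeasureTheory
open scoped ENNReal NNReal

set_option maxHeartbeats 1000000

noncomputable section

abbrev E2 : Type := lp (fun _ : ℕ => ℂ) 2

lemma sep_E2 : TopologicalSpace.SeparableSpace E2 := by
  let b : HilbertBasis ℕ ℂ E2 := default
  rw [← TopologicalSpace.isSeparable_univ_iff]
  have h1 : TopologicalSpace.IsSeparable (Set.range b) :=
    (Set.countable_range b).isSeparable
  have h2 := (h1.span (R := ℂ)).closure
  have h3 := b.dense_span
  have h4 : closure ((Submodule.span ℂ (Set.range ⇑b) : Submodule ℂ E2) : Set E2)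
      = (Set.univ : Set E2) := by
    rw [← Submodule.topologicalClosure_coe, h3, Submodule.top_coe]
  rwa [h4] at h2

section Aux

variable {α : Type*} [MeasurableSpace α] {μ : Measure α}

lemma aesm_apply (C : α → (E2 →L[ℂ] E2))
    (hCmeas : ∀ y : E2, AEStronglyMeasurable (fun x => C x y) μ)
    {f : α → E2} (hf : AEStronglyMeasurable f μ) :
    AEStronglyMeasurable (fun x => C x (f x)) μ := by
  obtain ⟨g, hg, hfg⟩ := hf
  have hsimp : ∀ s : SimpleFunc α E2, AEStronglyMeasurable (fun x => C x (s x)) μ := by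
    intro s
    refine SimpleFunc.induction ?_ ?_ s
    · intro c t ht
      have : (fun x => C x ((SimpleFunc.piecewise t ht (SimpleFunc.const α c)
          (SimpleFunc.const α 0)) x)) = fun x => t.indicator (fun x => C x c) x := by
        funext x
        by_cases hx : x ∈ t <;>
          simp [SimpleFunc.piecewise_apply, Set.indicator, hx]
      rw [this]
      exact (hCmeas c).indicator ht
    · intro p q _ hp hq
      have : (fun x => C x ((p + q) x)) = fun x => C x (p x) + C x (q x) := by
        funext x; simp [map_add]
      rw [this]
      exact hp.add hq
  have key : AEStronglyMeasurable (fun x => C x (g x)) μ := by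
    refine aestronglyMeasurable_of_tendsto_ae Filter.atTop
      (f := fun n x => C x (hg.approx n x)) (fun n => hsimp _) ?_
    filter_upwards with x
    exact ((C x).continuous.tendsto _).comp (hg.tendsto_approx x)
  exact key.congr (hfg.symm.mono fun x hx => by simp only [hx])

end Aux

theorem stmt7 (d : ℕ) (Ω : Set (EuclideanSpace ℝ (Fin d)))
    (hΩopen : IsOpen Ω) (hΩconn : IsConnected Ω)
    (C : EuclideanSpace ℝ (Fin d) →
      (lp (fun _ : ℕ => ℂ) 2 →L[ℂ] lp (fun _ : ℕ => ℂ) 2))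
    (hCmeas : ∀ y : lp (fun _ : ℕ => ℂ) 2,
      AEStronglyMeasurable (fun x => C x y) (volume.restrict Ω))
    (hCbdd : ∃ K : ℝ, ∀ᵐ x ∂(volume.restrict Ω), ‖C x‖ ≤ K)
    (α : ℝ) (hα : 0 < α) :
    (∀ᵐ x ∂(volume.restrict Ω), ∀ y : lp (fun _ : ℕ => ℂ) 2,
        α * ‖y‖ ^ 2 ≤ (inner ℂ (C x y) y : ℂ).re) ↔
    (∀ ψ : Lp (lp (fun _ : ℕ => ℂ) 2) 2 (volume.restrict Ω),
        α * ‖ψ‖ ^ 2 ≤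
          (∫ x, (inner ℂ (C x (ψ x)) (ψ x) : ℂ) ∂(volume.restrict Ω)).re) := by
  set μ := volume.restrict Ω with hμdef
  obtain ⟨K₀, hK₀⟩ := hCbdd
  set K : ℝ := |K₀| with hKdef
  have hK : ∀ᵐ x ∂μ, ‖C x‖ ≤ K := hK₀.mono fun x hx => hx.trans (le_abs_self K₀)
  have hKnn : 0 ≤ K := abs_nonneg K₀
  constructor
  · -- (a) → (b)
    intro ha ψ
    have hψm : AEStronglyMeasurable (⇑ψ) μ := Lp.aestronglyMeasurable ψ
    have hCψ : AEStronglyMeasurable (fun x => C x (ψ x)) μ :=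
      aesm_apply C hCmeas hψm
    have hinnm : AEStronglyMeasurable (fun x => (inner ℂ (C x (ψ x)) (ψ x) : ℂ)) μ :=
      hCψ.inner hψm
    have hψψ : Integrable (fun x => (inner ℂ (ψ x) (ψ x) : ℂ)) μ := L2.integrable_inner ψ ψ
    have hns : Integrable (fun x => ‖ψ x‖ ^ 2) μ := by
      have h := hψψ.re
      refine h.congr (Filter.Eventually.of_forall fun x => ?_)
      exact inner_self_eq_norm_sq (𝕜 := ℂ) (ψ x)
    have hint : Integrable (fun x => (inner ℂ (C x (ψ x)) (ψ x) : ℂ)) μ := by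
      refine Integrable.mono' (hns.const_mul K) hinnm ?_
      filter_upwards [hK] with x hx
      calc ‖(inner ℂ (C x (ψ x)) (ψ x) : ℂ)‖ ≤ ‖C x (ψ x)‖ * ‖ψ x‖ := norm_inner_le_norm _ _
        _ ≤ (‖C x‖ * ‖ψ x‖) * ‖ψ x‖ := by
            gcongr; exact (C x).le_opNorm _
        _ ≤ (K * ‖ψ x‖) * ‖ψ x‖ := by gcongr
        _ = K * ‖ψ x‖ ^ 2 := by ring
    have hre : (∫ x, (inner ℂ (C x (ψ x)) (ψ x) : ℂ) ∂μ).re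
        = ∫ x, ((inner ℂ (C x (ψ x)) (ψ x) : ℂ)).re ∂μ := by
      simpa using (integral_re hint).symm
    have hnorm : ‖ψ‖ ^ 2 = ∫ x, ‖ψ x‖ ^ 2 ∂μ := by
      have h1 : (RCLike.re (inner ℂ ψ ψ : ℂ)) = ‖ψ‖ ^ 2 := inner_self_eq_norm_sq ψ
      rw [← h1, L2.inner_def, ← integral_re hψψ]
      refine integral_congr_ae (Filter.Eventually.of_forall fun x => ?_)
      exact inner_self_eq_norm_sq (𝕜 := ℂ) (ψ x)
    rw [hre, hnorm, ← integral_const_mul]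
    refine integral_mono_ae (hns.const_mul α) hint.re ?_
    filter_upwards [ha] with x hx
    exact hx (ψ x)
  · -- (b) → (a)
    intro hb
    have : TopologicalSpace.SeparableSpace E2 := sep_E2
    have key : ∀ y : E2, ∀ᵐ x ∂μ, α * ‖y‖ ^ 2 ≤ (inner ℂ (C x y) y : ℂ).re := by
      intro y
      have hm : AEStronglyMeasurable (fun x => ((inner ℂ (C x y) y : ℂ)).re) μ := by
        have hm0 : AEStronglyMeasurable (fun x => (inner ℂ (C x y) y : ℂ)) μ :=
          (hCmeas y).inner aestronglyMeasurable_const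
        simpa using hm0.re
      have hbound : ∀ᵐ x ∂μ, ‖(inner ℂ (C x y) y : ℂ)‖ ≤ K * ‖y‖ ^ 2 := by
        filter_upwards [hK] with x hx
        calc ‖(inner ℂ (C x y) y : ℂ)‖ ≤ ‖C x y‖ * ‖y‖ := norm_inner_le_norm _ _
          _ ≤ (‖C x‖ * ‖y‖) * ‖y‖ := by gcongr; exact (C x).le_opNorm _
          _ ≤ (K * ‖y‖) * ‖y‖ := by gcongr
          _ = K * ‖y‖ ^ 2 := by ring
      have hmain : 0 ≤ᵐ[μ] fun x => (inner ℂ (C x y) y : ℂ).re - α * ‖y‖ ^ 2 := by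
        refine ae_nonneg_of_forall_setIntegral_nonneg_of_sigmaFinite ?_ ?_
        · intro s hs hμs
          refine Integrable.mono' (g := fun _ => K * ‖y‖ ^ 2 + α * ‖y‖ ^ 2)
            (integrableOn_const hμs.ne) ((hm.sub aestronglyMeasurable_const).restrict)
            ?_
          filter_upwards [ae_restrict_of_ae hbound] with x hx
          have h1 : |(inner ℂ (C x y) y : ℂ).re| ≤ K * ‖y‖ ^ 2 :=
            (Complex.abs_re_le_norm _).trans hx
          rw [Real.norm_eq_abs]
          have h3 := abs_sub ((inner ℂ (C x y) y : ℂ).re) (α * ‖y‖ ^ 2)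
          have h2 : |α * ‖y‖ ^ 2| = α * ‖y‖ ^ 2 := abs_of_nonneg (by positivity)
          rw [h2] at h3
          linarith
        · intro s hs hμs
          set ψ : Lp E2 2 μ := indicatorConstLp 2 hs hμs.ne y with hψdef
          have hψcoe : ⇑ψ =ᵐ[μ] s.indicator fun _ => y := indicatorConstLp_coeFn
          have hψnorm : ‖ψ‖ ^ 2 = ‖y‖ ^ 2 * (μ s).toReal := by
            rw [hψdef, norm_indicatorConstLp (by norm_num) (by norm_num)]
            have htoReal : ((2 : ℝ≥0∞).toReal) = (2 : ℝ) := by norm_num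
            rw [htoReal]
            rw [mul_pow, ← Real.rpow_natCast (μ.real s ^ (1 / (2:ℝ))) 2,
              ← Real.rpow_mul measureReal_nonneg]
            norm_num; exact Or.inl rfl
          have hinteq : (∫ x, (inner ℂ (C x (ψ x)) (ψ x) : ℂ) ∂μ)
              = ∫ x in s, (inner ℂ (C x y) y : ℂ) ∂μ := by
            rw [← integral_indicator hs]
            refine integral_congr_ae ?_
            filter_upwards [hψcoe] with x hx
            by_cases hxs : x ∈ s
            · simp [hx, Set.indicator_of_mem hxs]
            · simp [hx, Set.indicator_of_notMem hxs, inner_zero_left]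
          have hbint : IntegrableOn (fun x => (inner ℂ (C x y) y : ℂ)) s μ := by
            refine Integrable.mono' (g := fun _ => K * ‖y‖ ^ 2)
              (integrableOn_const hμs.ne)
              (((hCmeas y).inner aestronglyMeasurable_const).restrict) ?_
            exact ae_restrict_of_ae hbound
          have hb' := hb ψ
          rw [hψnorm, hinteq] at hb'
          have hre : (∫ x in s, (inner ℂ (C x y) y : ℂ) ∂μ).re
              = ∫ x in s, ((inner ℂ (C x y) y : ℂ)).re ∂μ := by
            simpa using (integral_re hbint).symm
          rw [hre] at hb'
          have hrint : IntegrableOn (fun x => ((inner ℂ (C x y) y : ℂ)).re) s μ := hbint.re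
          rw [integral_sub hrint (integrableOn_const hμs.ne)]
          rw [setIntegral_const, smul_eq_mul]
          rw [← measureReal_def] at hb'
          nlinarith [hb']
      filter_upwards [hmain] with x hx
      simp only [Pi.zero_apply] at hx
      linarith
    have hall : ∀ᵐ x ∂μ, ∀ n : ℕ,
        α * ‖TopologicalSpace.denseSeq E2 n‖ ^ 2
          ≤ (inner ℂ (C x (TopologicalSpace.denseSeq E2 n)) (TopologicalSpace.denseSeq E2 n) : ℂ).re :=
      MeasureTheory.ae_all_iff.2 fun n => key (TopologicalSpace.denseSeq E2 n)
    filter_upwards [hall] with x hx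
    intro y
    have hS : IsClosed {z : E2 | α * ‖z‖ ^ 2 ≤ (inner ℂ (C x z) z : ℂ).re} := by
      refine isClosed_le ?_ ?_
      · exact (continuous_const.mul ((continuous_norm).pow 2))
      · exact Complex.continuous_re.comp ((C x).continuous.inner continuous_id)
    have hsub : Set.range (TopologicalSpace.denseSeq E2) ⊆
        {z : E2 | α * ‖z‖ ^ 2 ≤ (inner ℂ (C x z) z : ℂ).re} := by
      rintro z ⟨n, rfl⟩
      exact hx n
    have : (Set.univ : Set E2) ⊆ {z : E2 | α * ‖z‖ ^ 2 ≤ (inner ℂ (C x z) z : ℂ).re} := by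
      rw [← (TopologicalSpace.denseRange_denseSeq E2).closure_range]
      exact hS.closure_subset_iff.2 hsub
    exact this (Set.mem_univ y)
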